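/- Let D : ℝ^{d×N} → ℝ^{d×N} be continuous and monotone, i.e. (D(T₁) − D(T₂)) · (T₁ − T₂) ≥ 0 for all T₁, T₂ ∈ ℝ^{d×N}. Then the closure of the range D(ℝ^{d×N}) is a convex subset of ℝ^{d×N}. -/

import Mathlib

open MeasureTheory Filter Topology Set

noncomputable section

open Finset in

lemma game_lemma {ι : Type} [Fintype ι] [Nonempty ι] (A : ι → ι → ℝ)
    (hA : ∀ i j, A i j + A j i ≤ 0) :
    ∃ lam : ι → ℝ, (∀ i, 0 ≤ lam i) ∧ (∑ i, lam i) = 1 ∧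
      ∀ i, (∑ j, lam j * A i j) ≤ 0 := by
  classical
  have quad : ∀ l : ι → ℝ, (∀ i, 0 ≤ l i) →
      (∑ i, ∑ j, l i * (l j * A i j)) ≤ 0 := by
    intro l hl
    have hswap : (∑ i, ∑ j, l i * l j * A j i) = ∑ i, ∑ j, l i * (l j * A i j) := by
      rw [Finset.sum_comm]
      exact Finset.sum_congr rfl fun i _ => Finset.sum_congr rfl fun j _ => by ring
    have h2 : (∑ i, ∑ j, l i * (l j * A i j)) + (∑ i, ∑ j, l i * (l j * A i j))
        = ∑ i, ∑ j, l i * l j * (A i j + A j i) := by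
      nth_rewrite 2 [← hswap]
      rw [← Finset.sum_add_distrib]
      exact Finset.sum_congr rfl fun i _ => by
        rw [← Finset.sum_add_distrib]
        exact Finset.sum_congr rfl fun j _ => by ring
    have h3 : (∑ i, ∑ j, l i * l j * (A i j + A j i)) ≤ 0 := by
      apply Finset.sum_nonpos; intro i _
      apply Finset.sum_nonpos; intro j _
      exact mul_nonpos_of_nonneg_of_nonpos (mul_nonneg (hl i) (hl j)) (hA i j)
    linarith
  by_contra hcon
  push_neg at hcon
  -- separation setup
  set V := EuclideanSpace ℝ ι with hV
  set ψ : (ι → ℝ) → V := fun l => (EuclideanSpace.equiv ι ℝ).symm (fun i => ∑ j, l j * A i j)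
    with hψ
  have hψapp : ∀ l i, ψ l i = ∑ j, l j * A i j := by
    intro l i
    simp [hψ, EuclideanSpace.equiv, WithLp.equiv_symm_apply]
  have hψlin : IsLinearMap ℝ ψ := by
    constructor
    · intro a b
      have : (fun i => ∑ j, (a + b) j * A i j)
          = (fun i => ∑ j, a j * A i j) + fun i => ∑ j, b j * A i j := by
        funext i; simp [Pi.add_apply, add_mul, Finset.sum_add_distrib]
      simp only [hψ, this, map_add]
    · intro c a
      have : (fun i => ∑ j, (c • a) j * A i j) = c • fun i => ∑ j, a j * A i j := by
        funext i; simp [Pi.smul_apply, smul_eq_mul, Finset.mul_sum, mul_assoc]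
      simp only [hψ, this, _root_.map_smul]
  have hψcont : Continuous ψ := by
    apply (EuclideanSpace.equiv ι ℝ).symm.continuous.comp
    exact continuous_pi fun i => continuous_finset_sum _ fun j _ =>
      (continuous_apply j).mul continuous_const
  set S : Set V := ψ '' stdSimplex ℝ ι with hS
  set T : Set V := {v : V | ∀ i, v i ≤ 0} with hT
  have hScv : Convex ℝ S := (convex_stdSimplex ℝ ι).is_linear_image hψlin
  have hScp : IsCompact S := (isCompact_stdSimplex ℝ ι).image hψcont
  have hTcv : Convex ℝ T := by
    intro x hx y hy a b ha hb hab
    intro i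
    have h1 := hx i
    have h2 := hy i
    have h3 : (a • x + b • y) i = a * x i + b * y i := rfl
    rw [h3]
    nlinarith
  have hTcl : IsClosed T := by
    have : T = ⋂ i, {v : V | v i ≤ 0} := by ext v; simp [hT]
    rw [this]
    exact isClosed_iInter fun i =>
      isClosed_le (by exact (continuous_apply i).comp (EuclideanSpace.equiv ι ℝ).continuous)
        continuous_const
  have hdisj : Disjoint S T := by
    rw [Set.disjoint_left]
    rintro v ⟨l, hl, rfl⟩ hvT
    obtain ⟨i, hi⟩ := hcon l hl.1 hl.2
    have := hvT i
    rw [hψapp] at this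
    linarith
  obtain ⟨f, u, v, hfS, huv, hfT⟩ :=
    geometric_hahn_banach_compact_closed hScv hScp hTcv hTcl hdisj
  have hv0 : v < 0 := by
    have h0T : (0 : V) ∈ T := fun i => le_of_eq rfl
    have := hfT 0 h0T
    simpa using this
  have hfe : ∀ i, f (EuclideanSpace.single i (1:ℝ)) ≤ 0 := by
    intro i
    by_contra hpos
    push_neg at hpos
    set c : ℝ := -v / f (EuclideanSpace.single i (1:ℝ)) with hc
    have hcpos : 0 < c := div_pos (by linarith) hpos
    have hbT : (-c) • EuclideanSpace.single i (1:ℝ) ∈ T := by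
      intro j
      rw [PiLp.smul_apply, EuclideanSpace.single_apply]
      by_cases h : j = i <;> simp [h] <;> nlinarith
    have := hfT _ hbT
    rw [_root_.map_smul] at this
    have : v < -c * f (EuclideanSpace.single i (1:ℝ)) := by simpa using this
    rw [hc] at this
    field_simp at this
    exact lt_irrefl _ this
  -- decomposition of f
  have hdecomp : ∀ a : V, f a = ∑ i, a i * f (EuclideanSpace.single i (1:ℝ)) := by
    intro a
    have ha : a = ∑ i, a i • EuclideanSpace.single i (1:ℝ) := by
      ext j
      rw [WithLp.ofLp_sum, Finset.sum_apply]
      simp [EuclideanSpace.single_apply]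
    nth_rewrite 1 [ha]
    rw [map_sum]
    exact Finset.sum_congr rfl fun i _ => by rw [_root_.map_smul]; simp
  set μ : ι → ℝ := fun i => -f (EuclideanSpace.single i (1:ℝ)) with hμ
  have hμnn : ∀ i, 0 ≤ μ i := fun i => by simp [hμ]; linarith [hfe i]
  set total : ℝ := ∑ i, μ i with htotal
  have htnn : 0 ≤ total := Finset.sum_nonneg fun i _ => hμnn i
  rcases eq_or_lt_of_le htnn with hzero | hpos
  · -- total = 0 ⇒ f ≡ 0, contradiction with separation
    have hall : ∀ i, μ i = 0 := by
      intro i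
      have := (Finset.sum_eq_zero_iff_of_nonneg (fun i _ => hμnn i)).mp hzero.symm
      exact this i (Finset.mem_univ i)
    have hfa : ∀ a : V, f a = 0 := by
      intro a
      rw [hdecomp a]
      apply Finset.sum_eq_zero
      intro i _
      have : f (EuclideanSpace.single i (1:ℝ)) = 0 := by
        have := hall i; simp [hμ] at this; linarith
      rw [this, mul_zero]
    obtain ⟨i₀⟩ := ‹Nonempty ι›
    have hmem : (fun j => if j = i₀ then (1:ℝ) else 0) ∈ stdSimplex ℝ ι := by
      constructor
      · intro j; by_cases h : j = i₀ <;> simp [h]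
      · simp [Finset.sum_ite_eq']
    have := hfS (ψ _) ⟨_, hmem, rfl⟩
    rw [hfa] at this
    linarith
  · set l : ι → ℝ := fun i => μ i / total with hl
    have hlnn : ∀ i, 0 ≤ l i := fun i => div_nonneg (hμnn i) htnn
    have hlsum : ∑ i, l i = 1 := by
      rw [hl]
      rw [← Finset.sum_div]
      field_simp [htotal]
      exact htotal.symm
    have hmem : l ∈ stdSimplex ℝ ι := ⟨fun i => hlnn i, hlsum⟩
    have hfal := hfS (ψ l) ⟨l, hmem, rfl⟩
    have hfval : f (ψ l) = -total * ∑ i, l i * ∑ j, l j * A i j := by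
      rw [hdecomp]
      rw [Finset.mul_sum]
      apply Finset.sum_congr rfl
      intro i _
      rw [hψapp]
      have : f (EuclideanSpace.single i (1:ℝ)) = -μ i := by simp [hμ]
      rw [this, hl]
      field_simp
    have hQ : (∑ i, l i * ∑ j, l j * A i j) ≤ 0 := by
      have := quad l hlnn
      calc (∑ i, l i * ∑ j, l j * A i j) = ∑ i, ∑ j, l i * (l j * A i j) := by
            exact Finset.sum_congr rfl fun i _ => by rw [Finset.mul_sum]
        _ ≤ 0 := this
    nlinarith [hfal, hfval, hQ, huv, hv0, hpos]

variable {E : Type} [NormedAddCommGroup E] [InnerProductSpace ℝ E] in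
/-- Hartman–Stampacchia / Minty: a continuous monotone map on a nonempty compact convex
set admits a solution of the variational inequality. -/
lemma minty_vi (D : E → E) (hD : Continuous D)
    (hmon : ∀ a b : E, (0:ℝ) ≤ inner ℝ (D a - D b) (a - b))
    (K : Set E) (hKcp : IsCompact K) (hKcv : Convex ℝ K) (hKne : K.Nonempty) :
    ∃ x ∈ K, ∀ z ∈ K, (0:ℝ) ≤ inner ℝ (D x) (z - x) := by
  classical
  -- Step 1: weak (Minty) solution
  have step1 : ∃ x ∈ K, ∀ z ∈ K, (0:ℝ) ≤ inner ℝ (D z) (z - x) := by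
    by_contra hcon
    push_neg at hcon
    -- family of closed sets indexed by z : K
    set C : K → Set E := fun z => {x : E | (0:ℝ) ≤ inner ℝ (D (z:E)) ((z:E) - x)} with hC
    have hCcl : ∀ z : K, IsClosed (C z) := by
      intro z
      have : Continuous fun x : E => (inner ℝ (D (z:E)) ((z:E) - x) : ℝ) :=
        (continuous_const.inner (continuous_const.sub continuous_id))
      exact isClosed_le continuous_const this
    have hempty : K ∩ ⋂ z : K, C z = ∅ := by
      rw [Set.eq_empty_iff_forall_notMem]
      rintro x ⟨hxK, hx⟩
      obtain ⟨z, hzK, hz⟩ := hcon x hxK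
      have := Set.mem_iInter.mp hx ⟨z, hzK⟩
      rw [hC] at this
      simp only [Set.mem_setOf_eq] at this
      linarith
    obtain ⟨t, ht⟩ := hKcp.elim_finite_subfamily_closed C hCcl hempty
    -- t must be nonempty
    rcases t.eq_empty_or_nonempty with rfl | htne
    · simp at ht
      obtain ⟨x0, hx0⟩ := hKne
      exact (Set.eq_empty_iff_forall_notMem.mp ht) x0 hx0
    · have : Nonempty {z // z ∈ t} := htne.to_subtype
      set A : {z // z ∈ t} → {z // z ∈ t} → ℝ :=
        fun i j => inner ℝ (D ((i:K):E)) (((j:K):E) - ((i:K):E)) with hA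
      have hAskew : ∀ i j, A i j + A j i ≤ 0 := by
        intro i j
        have := hmon ((i:K):E) ((j:K):E)
        have hexp : A i j + A j i
            = -(inner ℝ (D ((i:K):E) - D ((j:K):E)) (((i:K):E) - ((j:K):E)) : ℝ) := by
          simp [hA, inner_sub_left, inner_sub_right]
          ring
        rw [hexp]
        linarith
      obtain ⟨lam, hlnn, hlsum, hlA⟩ := game_lemma A hAskew
      set x : E := ∑ i, lam i • ((i : K) : E) with hx
      have hxK : x ∈ K := hKcv.sum_mem (fun i _ => hlnn i) (by simpa using hlsum)
        (fun i _ => (i : K).2)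
      have hxC : ∀ i : {z // z ∈ t}, x ∈ C (i : K) := by
        intro i
        simp only [hC, Set.mem_setOf_eq]
        have hinner : (inner ℝ (D ((i:K):E)) (((i:K):E) - x) : ℝ)
            = -∑ j, lam j * A i j := by
          rw [inner_sub_right, hx, inner_sum]
          simp only [real_inner_smul_right, hA]
          have : (inner ℝ (D ((i:K):E)) ((i:K):E) : ℝ)
              = ∑ j, lam j * inner ℝ (D ((i:K):E)) ((i:K):E) := by
            rw [← Finset.sum_mul, hlsum, one_mul]
          rw [this, ← Finset.sum_sub_distrib, ← Finset.sum_neg_distrib]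
          apply Finset.sum_congr rfl
          intro j _
          rw [inner_sub_right]
          ring
        rw [hinner]
        have := hlA i
        linarith
      have : x ∈ K ∩ ⋂ z ∈ t, C z := by
        refine ⟨hxK, ?_⟩
        rw [Set.mem_iInter₂]
        intro z hz
        exact hxC ⟨z, hz⟩
      rw [ht] at this
      exact this
  -- Step 2: Minty's trick
  obtain ⟨x, hxK, hx⟩ := step1
  refine ⟨x, hxK, ?_⟩
  intro w hwK
  have key : ∀ n : ℕ, (0:ℝ) ≤ inner ℝ (D (x + ((n:ℝ)+1)⁻¹ • (w - x))) (w - x) := by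
    intro n
    set s : ℝ := ((n:ℝ)+1)⁻¹ with hs
    have hs0 : 0 < s := by positivity
    have hs1 : s ≤ 1 := by
      rw [hs]
      apply inv_le_one_of_one_le₀
      have : (0:ℝ) ≤ (n:ℝ) := Nat.cast_nonneg n
      linarith
    set z : E := x + s • (w - x) with hz
    have hzK : z ∈ K := by
      have := hKcv hxK hwK (by linarith : (0:ℝ) ≤ 1 - s) hs0.le (by ring)
      convert this using 1
      rw [hz]
      module
    have h1 := hx z hzK
    have h2 : (z : E) - x = s • (w - x) := by rw [hz]; abel_nf
    rw [h2, real_inner_smul_right] at h1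
    exact nonneg_of_mul_nonneg_right h1 hs0
  have hlim : Filter.Tendsto (fun n : ℕ => (inner ℝ (D (x + ((n:ℝ)+1)⁻¹ • (w - x))) (w - x) : ℝ))
      Filter.atTop (nhds (inner ℝ (D x) (w - x))) := by
    have h1 : Filter.Tendsto (fun n : ℕ => x + ((n:ℝ)+1)⁻¹ • (w - x)) Filter.atTop (nhds x) := by
      have : Filter.Tendsto (fun n : ℕ => ((n:ℝ)+1)⁻¹) Filter.atTop (nhds 0) :=
        tendsto_one_div_add_atTop_nhds_zero_nat.congr (by intro n; simp [one_div])
      have := ((this.smul_const (w - x)).const_add x)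
      simpa using this
    have hcont : Continuous fun y : E => (inner ℝ (D y) (w - x) : ℝ) :=
      (hD.inner continuous_const)
    exact (hcont.tendsto x).comp h1
  exact ge_of_tendsto' hlim key

set_option maxHeartbeats 2000000

/-- The space of real `d × N` matrices with the Frobenius (Euclidean) inner ℝ product. -/
abbrev Mat (d N : ℕ) := EuclideanSpace ℝ (Fin d × Fin N)

/-- If `D : ℝ^{d×N} → ℝ^{d×N}` is continuous and monotone, i.e.
`(D(T₁) − D(T₂)) · (T₁ − T₂) ≥ 0` for all `T₁, T₂`, then the closure of the range of `D`
is a convex subset of `ℝ^{d×N}`. -/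
theorem convex_closure_range_of_monotone (d N : ℕ) (hd : 1 ≤ d) (hN : 1 ≤ N)
    (D : Mat d N → Mat d N) (hD : Continuous D)
    (hmon : ∀ T₁ T₂ : Mat d N, (0 : ℝ) ≤ (inner ℝ (D T₁ - D T₂) (T₁ - T₂) : ℝ)) :
    Convex ℝ (closure (Set.range D)) := by
  classical
  suffices h : convexHull ℝ (Set.range D) ⊆ closure (Set.range D) by
    have h1 : closure (Set.range D) = closure (convexHull ℝ (Set.range D)) :=
      Subset.antisymm (closure_mono (subset_convexHull ℝ _))
        (closure_minimal h isClosed_closure)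
    rw [h1]
    exact (convex_convexHull ℝ _).closure
  intro y hy
  rw [_root_.convexHull_eq] at hy
  obtain ⟨ι, t, w, z, hw0, hw1, hz, hyeq⟩ := hy
  choose xx hxx using hz
  set x : ι → Mat d N := fun i => if h : i ∈ t then xx i h else 0 with hxdef
  have hDx : ∀ i ∈ t, D (x i) = z i := by
    intro i hi
    simp only [hxdef, dif_pos hi]
    exact hxx i hi
  have hy2 : y = ∑ i ∈ t, w i • D (x i) := by
    rw [← hyeq, Finset.centerMass_eq_of_sum_1 _ _ hw1]
    exact Finset.sum_congr rfl fun i hi => by rw [hDx i hi]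
  set xbar : Mat d N := ∑ i ∈ t, w i • x i with hxbar
  set C₀ : ℝ := (∑ i ∈ t, w i * inner ℝ (D (x i)) (x i)) - inner ℝ y xbar with hC₀
  set Cp : ℝ := max C₀ 0 with hCp
  have hCp0 : 0 ≤ Cp := le_max_right _ _
  rw [Metric.mem_closure_iff]
  intro ε hε
  set e : ℝ := min (ε/(4*(‖xbar‖+1))) (ε^2/(8*(Cp+1))) with he
  have he0 : 0 < e := lt_min (by positivity) (by positivity)
  set R : ℝ := 2*‖xbar‖ + Real.sqrt (Cp/e) + 1 with hR
  have hsq : 0 ≤ Real.sqrt (Cp/e) := Real.sqrt_nonneg _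
  have hR0 : 0 < R := by positivity
  set G : Mat d N → Mat d N := fun a => D a + e • a - y with hG
  have hGc : Continuous G := by
    apply Continuous.sub _ continuous_const
    exact hD.add (continuous_id.const_smul e)
  have hGmon : ∀ a b : Mat d N, (0:ℝ) ≤ inner ℝ (G a - G b) (a - b) := by
    intro a b
    have h1 : G a - G b = (D a - D b) + e • (a - b) := by
      simp only [hG]
      module
    rw [h1, inner_add_left, real_inner_smul_left, real_inner_self_eq_norm_sq]
    have := hmon a b
    nlinarith [sq_nonneg ‖a - b‖]
  set K : Set (Mat d N) := Metric.closedBall 0 R with hK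
  obtain ⟨p, hpK, hVI⟩ := minty_vi G hGc hGmon K (isCompact_closedBall 0 R)
    (convex_closedBall 0 R) ⟨0, Metric.mem_closedBall_self hR0.le⟩
  have hxbarK : xbar ∈ K := by
    have hle : ‖xbar‖ ≤ R := by rw [hR]; linarith [norm_nonneg xbar]
    rw [hK, Metric.mem_closedBall, dist_zero_right]
    exact hle
  set u : Mat d N := p - xbar with hu
  -- inequality from the variational inequality at z = xbar
  have hii : (inner ℝ (D p - y) u : ℝ) ≤ -e * ‖u‖^2 - e * inner ℝ xbar u := by
    have h0 := hVI xbar hxbarK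
    have heq : (inner ℝ (G p) (xbar - p) : ℝ)
        = -((inner ℝ (D p - y) u : ℝ) + e * ‖u‖^2 + e * inner ℝ xbar u) := by
      have hxp : xbar - p = -u := by rw [hu]; abel
      rw [hxp, hG]
      simp only [inner_neg_right, inner_sub_left, inner_add_left, real_inner_smul_left]
      have hp : p = u + xbar := by rw [hu]; abel
      have : (inner ℝ p u : ℝ) = ‖u‖^2 + inner ℝ xbar u := by
        rw [hp, inner_add_left, real_inner_self_eq_norm_sq]
      rw [this]
      ring
    rw [heq] at h0
    linarith
  -- inequality from monotonicity against the convex combination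
  have hiii : (0:ℝ) ≤ (inner ℝ (D p - y) u : ℝ) + C₀ := by
    have hsum : (0:ℝ) ≤ ∑ i ∈ t, w i * inner ℝ (D p - D (x i)) (p - x i) :=
      Finset.sum_nonneg fun i hi => mul_nonneg (hw0 i hi) (hmon p (x i))
    have hexp : (∑ i ∈ t, w i * inner ℝ (D p - D (x i)) (p - x i))
        = (inner ℝ (D p - y) u : ℝ) + C₀ := by
      have hterm : ∀ i ∈ t, w i * (inner ℝ (D p - D (x i)) (p - x i) : ℝ)
          = w i * inner ℝ (D p) p - inner ℝ (D p) (w i • x i)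
            - inner ℝ (w i • D (x i)) p + w i * inner ℝ (D (x i)) (x i) := by
        intro i hi
        rw [inner_sub_left, inner_sub_right, inner_sub_right,
          real_inner_smul_right, real_inner_smul_left]
        ring
      rw [Finset.sum_congr rfl hterm]
      have h1 : ∑ i ∈ t, (w i * (inner ℝ (D p) p : ℝ) - inner ℝ (D p) (w i • x i)
            - inner ℝ (w i • D (x i)) p + w i * inner ℝ (D (x i)) (x i))
          = (∑ i ∈ t, w i) * inner ℝ (D p) p - inner ℝ (D p) xbar - inner ℝ y p
            + ∑ i ∈ t, w i * inner ℝ (D (x i)) (x i) := by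
        rw [hxbar, inner_sum, hy2, sum_inner, Finset.sum_mul]
        rw [Finset.sum_add_distrib, Finset.sum_sub_distrib, Finset.sum_sub_distrib]
      rw [h1, hw1, one_mul, hC₀]
      have h2 : (inner ℝ (D p) p : ℝ) - inner ℝ (D p) xbar = inner ℝ (D p) u := by
        rw [hu, inner_sub_right]
      have h3 : (inner ℝ (D p - y) u : ℝ) = inner ℝ (D p) u - inner ℝ y u := by
        rw [inner_sub_left]
      have h4 : (inner ℝ y p : ℝ) = inner ℝ y u + inner ℝ y xbar := by
        rw [hu, inner_sub_right]; ring
      linarith [h2, h3, h4]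
    linarith [hexp ▸ hsum]
  -- bound on ‖u‖
  have hub : ‖u‖ ≤ ‖xbar‖ + Real.sqrt (Cp/e) := by
    have hC0Cp : C₀ ≤ Cp := le_max_left _ _
    have hCS : -(inner ℝ xbar u : ℝ) ≤ ‖xbar‖ * ‖u‖ := by
      have := abs_real_inner_le_norm xbar u
      have h := neg_abs_le (inner ℝ xbar u : ℝ)
      linarith [abs_nonneg (inner ℝ xbar u : ℝ)]
    have hq1 : e * ‖u‖^2 ≤ Cp + e * (‖xbar‖ * ‖u‖) := by nlinarith [hii, hiii]
    have hq2 : ‖u‖^2 ≤ Cp/e + ‖xbar‖ * ‖u‖ := by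
      rw [← sub_le_iff_le_add, le_div_iff₀ he0]
      nlinarith [hq1]
    set s : ℝ := ‖u‖
    set b : ℝ := ‖xbar‖
    set q : ℝ := Real.sqrt (Cp/e)
    have hqq : q^2 = Cp/e := Real.sq_sqrt (by positivity)
    have hs0 : 0 ≤ s := norm_nonneg _
    have hb0 : 0 ≤ b := norm_nonneg _
    nlinarith [hq2, hqq, hs0, hb0, hsq, sq_nonneg (s - b - q), mul_nonneg hsq hs0,
      mul_nonneg hsq hb0]
  have hpnorm : ‖p‖ ≤ 2*‖xbar‖ + Real.sqrt (Cp/e) := by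
    have : p = xbar + u := by rw [hu]; abel
    calc ‖p‖ = ‖xbar + u‖ := by rw [← this]
      _ ≤ ‖xbar‖ + ‖u‖ := norm_add_le _ _
      _ ≤ 2*‖xbar‖ + Real.sqrt (Cp/e) := by linarith
  have hpR : ‖p‖ < R := by rw [hR]; linarith
  -- G p = 0
  have hGp : G p = 0 := by
    by_contra hGp0
    have hGn : 0 < ‖G p‖ := norm_pos_iff.mpr hGp0
    set τ : ℝ := (R - ‖p‖) / ‖G p‖ with hτ
    have hτ0 : 0 < τ := div_pos (by linarith) hGn
    have hzK : p - τ • G p ∈ K := by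
      rw [hK, Metric.mem_closedBall, dist_zero_right]
      calc ‖p - τ • G p‖ ≤ ‖p‖ + ‖τ • G p‖ := norm_sub_le _ _
        _ = ‖p‖ + τ * ‖G p‖ := by rw [norm_smul, Real.norm_of_nonneg hτ0.le]
        _ = ‖p‖ + (R - ‖p‖) := by rw [hτ]; field_simp
        _ = R := by ring
    have h0 := hVI _ hzK
    have heq : (inner ℝ (G p) ((p - τ • G p) - p) : ℝ) = -τ * ‖G p‖^2 := by
      have : (p - τ • G p) - p = -(τ • G p) := by abel
      rw [this, inner_neg_right, real_inner_smul_right, real_inner_self_eq_norm_sq]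
      ring
    rw [heq] at h0
    nlinarith [sq_nonneg ‖G p‖, mul_pos hτ0 (mul_pos hGn hGn)]
  -- conclude
  refine ⟨D p, Set.mem_range_self p, ?_⟩
  have hDp : y - D p = e • p := by
    have : D p + e • p - y = 0 := hGp
    have h := congrArg (fun v => y - D p - (D p + e • p - y) + (D p - y)) this
    -- simpler: solve directly
    have h2 : D p = y - e • p := by
      have := hGp
      rw [hG] at this
      have := sub_eq_zero.mp this
      rw [← this]; abel
    rw [h2]; abel
  have hdist : dist y (D p) = e * ‖p‖ := by
    rw [dist_eq_norm, hDp, norm_smul, Real.norm_of_nonneg he0.le]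
  rw [hdist]
  -- final numeric bound
  have hes : e * Real.sqrt (Cp/e) = Real.sqrt (e * Cp) := by
    rw [show e * Cp = e^2 * (Cp/e) by field_simp,
      Real.sqrt_mul (by positivity) (Cp/e), Real.sqrt_sq he0.le]
  have h1 : e ≤ ε/(4*(‖xbar‖+1)) := min_le_left _ _
  have h2 : e ≤ ε^2/(8*(Cp+1)) := min_le_right _ _
  have hb1 : 2*e*‖xbar‖ < ε/2 := by
    have hx0 : (0:ℝ) ≤ ‖xbar‖ := norm_nonneg _
    have hden : (0:ℝ) < 4*(‖xbar‖+1) := by positivity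
    have key : e * (4*(‖xbar‖+1)) ≤ ε := (le_div_iff₀ hden).mp h1
    nlinarith [key, he0, hx0]
  have hb2 : Real.sqrt (e * Cp) < ε/2 := by
    rw [show ε/2 = Real.sqrt ((ε/2)^2) from (Real.sqrt_sq (by positivity)).symm]
    apply Real.sqrt_lt_sqrt (by positivity)
    have hden : (0:ℝ) < 8*(Cp+1) := by positivity
    have key : e * (8*(Cp+1)) ≤ ε^2 := (le_div_iff₀ hden).mp h2
    nlinarith [key, he0, hCp0, hε]
  calc e * ‖p‖ ≤ e * (2*‖xbar‖ + Real.sqrt (Cp/e)) := by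
        apply mul_le_mul_of_nonneg_left hpnorm he0.le
    _ = 2*e*‖xbar‖ + Real.sqrt (e * Cp) := by rw [mul_add, hes]; ring
    _ < ε := by linarith
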